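/- For the BH procedure at level q on m p-values, the number of rejections R(p), as a function of a vector p ∈ [0,1]^m in which the j-th coordinate is rejected, is determined entirely by the other m−1 coordinates: if j is rejected, then R(p) = 1 + max{ r ∈ {0,…,m−1} : p^{(j)}_{(r)} ≤ (r+1)q/m }, where p^{(j)}_{(1)} ≤ ⋯ ≤ p^{(j)}_{(m−1)} are the order statistics of the p-values excluding p_j (with the convention that the maximum over the empty condition-set is 0). -/

import Mathlib

open Classical in
lemma orderstat_le_iff {m : ℕ} (f : Fin m → ℝ) (a : ℝ) (k : Fin m) :
    f (Tuple.sort f k) ≤ a ↔ (k : ℕ) + 1 ≤ Fintype.card {i // f i ≤ a} := by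
  have h := Tuple.lt_card_le_iff_apply_le_of_monotone (f := f ∘ Tuple.sort f) (a := a)
    (j := k) (Tuple.monotone_sort f)
  rw [← Fintype.card_subtype] at h
  have hcard : Fintype.card {i // (f ∘ Tuple.sort f) i ≤ a}
      = Fintype.card {i // f i ≤ a} :=
    Fintype.card_congr (Equiv.subtypeEquiv (Tuple.sort f) (fun i => Iff.rfl))
  rw [hcard] at h
  simpa [Nat.succ_le_iff, Fin.lt_iff_val_lt_val] using h.symm

open Classical in
lemma card_split {n : ℕ} (p : Fin (n + 1) → ℝ) (j : Fin (n + 1)) (a : ℝ) :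
    Fintype.card {i // p i ≤ a}
      = (if p j ≤ a then 1 else 0)
        + Fintype.card {i : Fin n // (p ∘ j.succAbove) i ≤ a} := by
  rw [Fintype.card_subtype, Fintype.card_subtype, Finset.card_filter,
    Finset.card_filter, Fin.sum_univ_succAbove (fun i => if p i ≤ a then 1 else 0) j]
  rfl



open Classical in
/-- The number of rejections of the Benjamini–Hochberg procedure at level `q` on
`p ∈ [0,1]^m`: `R = max { r : p_{(r)} ≤ r·q/m }` (with `R = 0` if the set is
empty), where `p_{(j+1)} = p (Tuple.sort p j)` is the `(j+1)`-st order statistic. -/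
noncomputable def bhCount (m : ℕ) (q : ℝ) (p : Fin m → ℝ) : ℕ :=
  (Finset.univ.filter
      (fun j : Fin m => p (Tuple.sort p j) ≤ ((j : ℕ) + 1) * q / m)).sup
    (fun j => (j : ℕ) + 1)

/-- BH rejects hypothesis `j` iff `p j ≤ R·q/m` where `R` is the number of
rejections. -/
def bhRejects (m : ℕ) (q : ℝ) (p : Fin m → ℝ) (j : Fin m) : Prop :=
  p j ≤ (bhCount m q p : ℝ) * q / m

open Classical in
/-- On the event that index `j` is rejected by BH at level `q` (with `m = n+1`
hypotheses), the rejection count is determined by the other `m−1` p-values: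
`R(p) = 1 + max { r ∈ {0,…,m−1} : p^{(j)}_{(r)} ≤ (r+1)·q/m }`, where
`p^{(j)}_{(i+1)}` is the `(i+1)`-st order statistic of the p-values excluding
`p j` (the vector `p ∘ j.succAbove`), and the maximum over an empty
condition-set is `0`. -/
theorem stmt7 (n : ℕ) (q : ℝ) (hq : q ∈ Set.Ioo (0 : ℝ) 1) (p : Fin (n + 1) → ℝ)
    (hp : ∀ i, p i ∈ Set.Icc (0 : ℝ) 1) (j : Fin (n + 1))
    (hrej : bhRejects (n + 1) q p j) :
    bhCount (n + 1) q p =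
      1 + (Finset.univ.filter
            (fun i : Fin n =>
              (p ∘ j.succAbove) (Tuple.sort (p ∘ j.succAbove) i) ≤
                ((i : ℕ) + 2) * q / (n + 1))).sup (fun i => (i : ℕ) + 1) := by
  have hq0 : 0 < q := hq.1
  set t : ℕ → ℝ := fun r => (r : ℝ) * q / ((n : ℝ) + 1) with ht
  have htmono : Monotone t := by
    intro a b hab
    have hab' : (a : ℝ) ≤ b := by exact_mod_cast hab
    dsimp only [t]
    gcongr
  set N : ℝ → ℕ := fun a => Fintype.card {i // p i ≤ a} with hN
  set N' : ℝ → ℕ := fun a => Fintype.card {i : Fin n // (p ∘ j.succAbove) i ≤ a} with hN'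
  have hNmono : Monotone N := fun a b hab =>
    Fintype.card_subtype_mono _ _ (fun i hi => le_trans hi hab)
  have hNle : ∀ a, N a ≤ n + 1 := fun a => by
    simpa using Fintype.card_subtype_le (fun i : Fin (n+1) => p i ≤ a)
  have hsplit : ∀ a, N a = (if p j ≤ a then 1 else 0) + N' a := fun a => card_split p j a
  set R := bhCount (n + 1) q p with hR
  -- lower bound on bhCount from counts
  have hsup_le : ∀ k : Fin (n + 1), (k : ℕ) + 1 ≤ N (t ((k : ℕ) + 1)) → (k : ℕ) + 1 ≤ R := by
    intro k hk
    refine Finset.le_sup (f := fun j : Fin (n+1) => (j : ℕ) + 1) ?_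
    rw [Finset.mem_filter]
    refine ⟨Finset.mem_univ _, ?_⟩
    rw [orderstat_le_iff]
    have h2 : (((k : ℕ) : ℝ) + 1) * q / (((n + 1 : ℕ) : ℕ) : ℝ) = t ((k : ℕ) + 1) := by
      dsimp only [t]; push_cast; ring
    rw [h2]
    exact hk
  -- the sup is attained
  have hmem : 1 ≤ R → ∃ k : Fin (n + 1), R = (k : ℕ) + 1 ∧ (k : ℕ) + 1 ≤ N (t ((k : ℕ) + 1)) := by
    intro h1
    have hne : (Finset.univ.filter
        (fun k : Fin (n+1) => p (Tuple.sort p k) ≤ ((k : ℕ) + 1) * q / ((n : ℕ) + 1 : ℕ))).Nonempty := by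
      by_contra hcon
      rw [Finset.not_nonempty_iff_eq_empty] at hcon
      have : R = 0 := by rw [hR, bhCount]; rw [hcon]; simp
      omega
    obtain ⟨k, hkmem, hkeq⟩ := Finset.exists_mem_eq_sup _ hne (fun j : Fin (n+1) => (j : ℕ) + 1)
    rw [Finset.mem_filter, orderstat_le_iff] at hkmem
    refine ⟨k, by rw [hR, bhCount]; exact hkeq, ?_⟩
    have h2 : (((k : ℕ) : ℝ) + 1) * q / (((n + 1 : ℕ) : ℕ) : ℝ) = t ((k : ℕ) + 1) := by
      dsimp only [t]; push_cast; ring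
    rw [h2] at hkmem
    exact hkmem.2
  -- R ≥ 1
  have hR1 : 1 ≤ R := by
    by_contra hcon
    have hR0 : R = 0 := by omega
    have hpj : p j ≤ 0 := by
      have h2 := hrej
      rw [bhRejects, ← hR, hR0] at h2
      simpa using h2
    have hc : (0 : ℕ) + 1 ≤ N (t 1) := by
      rw [hN, Nat.succ_le_iff, Fintype.card_pos_iff]
      refine ⟨⟨j, le_trans hpj ?_⟩⟩
      dsimp only [t]; positivity
    have := hsup_le 0 (by simpa using hc)
    omega
  have hpjR : p j ≤ t R := by
    have h2 := hrej
    rw [bhRejects, ← hR] at h2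
    have h3 : ((R : ℕ) : ℝ) * q / (((n + 1 : ℕ) : ℕ) : ℝ) = t R := by
      dsimp only [t]; push_cast; ring
    rw [h3] at h2
    exact h2
  -- N (t R) = R
  have hNR : N (t R) = R := by
    have hge : R ≤ N (t R) := by
      obtain ⟨k, hk1, hk2⟩ := hmem hR1
      rw [hk1]; exact hk2
    have hle : N (t R) ≤ R := by
      by_contra hcon
      push_neg at hcon
      set R' := N (t R) with hR'
      have hR'le : R' ≤ n + 1 := hNle _
      have h2 : R' ≤ N (t R') := le_trans (le_of_eq rfl) (hNmono (htmono hcon.le))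
      have h3 := hsup_le ⟨R' - 1, by omega⟩ (by
        have : (R' - 1) + 1 = R' := by omega
        simpa [this] using h2)
      simp only [Fin.val_mk] at h3
      omega
    omega
  have hRle : R ≤ n + 1 := hNR ▸ hNle _
  -- N' (t R) = R - 1
  have hN'R : N' (t R) = R - 1 := by
    have := hsplit (t R)
    rw [if_pos hpjR, hNR] at this
    omega
  set S := (Finset.univ.filter
            (fun i : Fin n =>
              (p ∘ j.succAbove) (Tuple.sort (p ∘ j.succAbove) i) ≤
                ((i : ℕ) + 2) * q / (n + 1))).sup (fun i => (i : ℕ) + 1) with hS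
  -- membership in the RHS filter in counting terms
  have hfilt : ∀ i : Fin n,
      (i ∈ Finset.univ.filter (fun i : Fin n =>
        (p ∘ j.succAbove) (Tuple.sort (p ∘ j.succAbove) i) ≤
          ((i : ℕ) + 2) * q / (n + 1))) ↔ (i : ℕ) + 1 ≤ N' (t ((i : ℕ) + 2)) := by
    intro i
    rw [Finset.mem_filter, orderstat_le_iff]
    have h2 : (((i : ℕ) : ℝ) + 2) * q / ((n : ℝ) + 1) = t ((i : ℕ) + 2) := by
      dsimp only [t]; push_cast; ring
    rw [h2]
    simp only [Finset.mem_univ, true_and]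
    rfl
  -- S ≤ R - 1
  have hSle : S ≤ R - 1 := by
    rw [hS]
    refine Finset.sup_le ?_
    intro i hi
    rw [hfilt] at hi
    by_contra hcon
    push_neg at hcon
    have hRi : R ≤ (i : ℕ) + 1 := by omega
    have hpj2 : p j ≤ t ((i : ℕ) + 2) := le_trans hpjR (htmono (by omega))
    have hcount : (i : ℕ) + 2 ≤ N (t ((i : ℕ) + 2)) := by
      rw [hsplit, if_pos hpj2]
      omega
    have h3 := hsup_le ⟨(i : ℕ) + 1, by omega⟩ (by simp only [Fin.val_mk]; exact hcount)
    simp only [Fin.val_mk] at h3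
    omega
  -- S ≥ R - 1
  have hSge : R - 1 ≤ S := by
    rcases Nat.lt_or_ge R 2 with h2 | h2
    · omega
    · have hn1 : R - 2 < n := by omega
      have hmem2 : (⟨R - 2, hn1⟩ : Fin n) ∈ Finset.univ.filter (fun i : Fin n =>
          (p ∘ j.succAbove) (Tuple.sort (p ∘ j.succAbove) i) ≤
            ((i : ℕ) + 2) * q / (n + 1)) := by
        rw [hfilt]
        simp only [Fin.val_mk]
        have : R - 2 + 2 = R := by omega
        rw [this, hN'R]
        omega
      have := Finset.le_sup (f := fun i : Fin n => (i : ℕ) + 1) hmem2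
      simp only [Fin.val_mk] at this
      rw [← hS] at this
      omega
  omega
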